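/- Consider the state-based algorithm with parameters (ω, φ) and decidable predicate R, started at s₀ = λn.none. Suppose the algorithm terminates in state sⱼ. Then sⱼ encodes an approximate explicit maximal object with respect to R and (ω, φ): for all n ≤ ω(sⱼ), if xₙ ∈ M[sⱼ] then R(M[sⱼ]↾n ∪ {xₙ}, φ(sⱼ)), and if xₙ ∉ M[sⱼ] then ¬R(M[sⱼ]↾n ∪ {xₙ}, f[sⱼ](n)). -/
import Mathlib


-- A state is a function `ℕ → Option ℕ`; `s n = none` means `xₙ ∈ M[s]`, and
-- `s n = some p` means `xₙ ∉ M[s]` with recorded evidence `f[s](n) = p`.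

/-- The finite set `M[s]↾n = M[s] ∩ {x_m | m < n}`. -/
def StateSeg {X : Type*} [DecidableEq X] (x : ℕ → X) (s : ℕ → Option ℕ) (n : ℕ) : Finset X :=
  ((Finset.range n).filter fun m => s m = none).image x

instance decExistsLE (N : ℕ) (p : ℕ → Prop) [DecidablePred p] :
    Decidable (∃ m, m ≤ N ∧ p m) :=
  decidable_of_iff (∃ m, m < N + 1 ∧ p m) (by simp [Nat.lt_succ_iff])

/-- One step of the algorithm with parameters `(ω, φ)` and predicate `R`:
search for the least `n ≤ ω s` with `xₙ ∈ M[s]` and `¬R(M[s]↾n ∪ {xₙ}, φ s)`;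
if none exists the state is final (the step returns `s` itself), otherwise
keep `s` below `n`, record `φ s` at `n`, and put everything above `n` back into `M`. -/
def StateStep {X : Type*} [DecidableEq X] (x : ℕ → X) (R : Finset X → ℕ → Prop)
    [∀ A p, Decidable (R A p)] (ω φ : (ℕ → Option ℕ) → ℕ)
    (s : ℕ → Option ℕ) : ℕ → Option ℕ :=
  if h : ∃ m, m ≤ ω s ∧ s m = none ∧ ¬ R (StateSeg x s m ∪ {x m}) (φ s) then
    fun k => if k < Nat.find h then s k else if k = Nat.find h then some (φ s) else none
  else s

/-- The run of the algorithm started at the initial state `s₀ = λn.none`. -/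
def StateRun {X : Type*} [DecidableEq X] (x : ℕ → X) (R : Finset X → ℕ → Prop)
    [∀ A p, Decidable (R A p)] (ω φ : (ℕ → Option ℕ) → ℕ) : ℕ → ℕ → Option ℕ
  | 0 => fun _ => none
  | i + 1 => StateStep x R ω φ (StateRun x R ω φ i)

/-- A state is final (the algorithm terminates in it) if the search fails. -/
def StateFinal {X : Type*} [DecidableEq X] (x : ℕ → X) (R : Finset X → ℕ → Prop)
    (ω φ : (ℕ → Option ℕ) → ℕ) (s : ℕ → Option ℕ) : Prop :=
  ¬ ∃ m, m ≤ ω s ∧ s m = none ∧ ¬ R (StateSeg x s m ∪ {x m}) (φ s)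

lemma stateSeg_congr {X : Type*} [DecidableEq X] (x : ℕ → X) {s t : ℕ → Option ℕ} {n : ℕ}
    (h : ∀ m < n, s m = t m) : StateSeg x s n = StateSeg x t n := by
  unfold StateSeg
  congr 1
  apply Finset.filter_congr
  intro m hm
  rw [h m (Finset.mem_range.mp hm)]

lemma stateRun_inv {X : Type*} [DecidableEq X] (x : ℕ → X) (R : Finset X → ℕ → Prop)
    [∀ A p, Decidable (R A p)] (ω φ : (ℕ → Option ℕ) → ℕ) :
    ∀ i n p, StateRun x R ω φ i n = some p →
      ¬ R (StateSeg x (StateRun x R ω φ i) n ∪ {x n}) p := by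
  intro i
  induction i with
  | zero => intro n p h; simp [StateRun] at h
  | succ i ih =>
    intro n p h
    show ¬ R (StateSeg x (StateRun x R ω φ (i+1)) n ∪ {x n}) p
    have hdef : StateRun x R ω φ (i+1) = StateStep x R ω φ (StateRun x R ω φ i) := rfl
    set s := StateRun x R ω φ i with hs
    rw [hdef] at h ⊢
    unfold StateStep at h ⊢
    split at h
    · rename_i hex
      set N := Nat.find hex with hN
      rcases lt_trichotomy n N with hlt | heq | hgt
      · simp only [hlt, if_pos] at h
        have hseg : StateSeg x (fun k => if k < N then s k else if k = N then some (φ s) else none) n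
            = StateSeg x s n := by
          apply stateSeg_congr
          intro m hm
          simp [lt_trans hm hlt]
        simp only [dif_pos hex]
        rw [← hN, hseg]
        exact ih n p h
      · subst heq
        have hp : φ s = p := by
          simpa using h
        have hfind := Nat.find_spec hex
        have hseg : StateSeg x (fun k => if k < N then s k else if k = N then some (φ s) else none) N
            = StateSeg x s N := by
          apply stateSeg_congr
          intro m hm
          simp [hm]
        simp only [dif_pos hex]
        rw [← hN, hseg, ← hp]
        exact hfind.2.2
      · have h1 : ¬ n < N := Nat.lt_asymm hgt
        have h2 : n ≠ N := Nat.ne_of_gt hgt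
        simp [h1, h2] at h
    · rename_i hex
      simp only [dif_neg hex]
      exact ih n p h

/-- If the algorithm terminates in state `sⱼ`, then `sⱼ` encodes an approximate explicit
maximal object w.r.t. `R` and `(ω, φ)`: for all `n ≤ ω sⱼ`, if `xₙ ∈ M[sⱼ]` then
`R(M[sⱼ]↾n ∪ {xₙ}, φ sⱼ)`, and if `xₙ ∉ M[sⱼ]` then `¬R(M[sⱼ]↾n ∪ {xₙ}, f[sⱼ](n))`. -/
theorem stmt10 {X : Type*} [DecidableEq X] (x : ℕ → X) (R : Finset X → ℕ → Prop)
    [∀ A p, Decidable (R A p)] (ω φ : (ℕ → Option ℕ) → ℕ)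
    (j : ℕ) (hterm : StateFinal x R ω φ (StateRun x R ω φ j)) :
    ∀ n ≤ ω (StateRun x R ω φ j),
      (StateRun x R ω φ j n = none →
        R (StateSeg x (StateRun x R ω φ j) n ∪ {x n}) (φ (StateRun x R ω φ j))) ∧
      ∀ p : ℕ, StateRun x R ω φ j n = some p →
        ¬ R (StateSeg x (StateRun x R ω φ j) n ∪ {x n}) p := by
  intro n hn
  constructor
  · intro hnone
    by_contra hR
    exact hterm ⟨n, hn, hnone, hR⟩
  · intro p hp
    exact stateRun_inv x R ω φ j n p hp
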